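/- (Expected AoII: the finite system.) Assume N ≥ 3. Let n = (n_1,…,n_{N−1}) be a threshold policy with τ = max_d n_d ≥ 2 and l_d = d(d+1)/2, and let π be a stationary distribution of the chain induced by n with finite mean age, i.e. Σ_{d=0}^{N−1} Σ_{Δ∈ℕ} Δ·π_d(Δ) < ∞. Define ω_d(Δ) = Δ·π_d(Δ), Ω_d = Σ_{Δ ≥ τ} ω_d(Δ), and Π_d = Σ_{Δ ≥ τ} π_d(Δ). Then the expected AoII Δ̄ = Σ_{d=0}^{N−1} Σ_{Δ∈ℕ} Δ·π_d(Δ) equals Σ_{d=1}^{N−1}(Σ_{Δ=l_d}^{τ−1} ω_d(Δ) + Ω_d), and for each 1 ≤ d ≤ N−1: Ω_d = Σ_{d′=1}^{N−1} P_{d′,d}·(Σ_{Δ=τ−d}^{τ−1}(1 − p_s·a(d′,Δ))·ω_{d′}(Δ) + p_f·Ω_{d′}) + d·Π_d. -/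

import Mathlib

/-- Transition weights of the source mismatch chain:
`P d d = 1 - 2p` for `0 ≤ d ≤ N-1`; `P d (d±1) = p` for `1 ≤ d ≤ N-2`;
`P 0 1 = 2p`, `P (N-1) (N-2) = 2p`; all other entries `0`. -/
noncomputable def Pw (N : ℕ) (p : ℝ) (d d' : ℕ) : ℝ :=
  if d' = d then 1 - 2 * p
  else if d = 0 ∧ d' = 1 then 2 * p
  else if d = N - 1 ∧ d' = N - 2 then 2 * p
  else if 1 ≤ d ∧ d ≤ N - 2 ∧ (d' = d + 1 ∨ d' + 1 = d) then p
  else 0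

/-- One-step transition kernel under action `a = 0` (idle):
`K₀((d,Δ),(d',Δ'(d'))) = P_{d,d'}` where `Δ'(d') = 0` if `d' = 0` and
`Δ'(d') = Δ + d'` otherwise. -/
noncomputable def K0 (N : ℕ) (p : ℝ) (x y : ℕ × ℕ) : ℝ :=
  if y.2 = (if y.1 = 0 then 0 else x.2 + y.1) then Pw N p x.1 y.1 else 0

/-- One-step transition kernel under action `a = 1` (transmit):
`K₁((d,Δ),·) = p_s(1-2p)·δ_{(0,0)} + 2 p_s p·δ_{(1,1)} + p_f·K₀((d,Δ),·)`,
with `p_f = 1 - p_s`. -/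
noncomputable def K1 (N : ℕ) (p ps : ℝ) (x y : ℕ × ℕ) : ℝ :=
  ps * (1 - 2 * p) * (if y = (0, 0) then 1 else 0)
    + 2 * ps * p * (if y = (1, 1) then 1 else 0)
    + (1 - ps) * K0 N p x y

/-- Kernel induced by a threshold policy `n = (n_1,…,n_{N-1})`: the policy takes
action `a(d,Δ) = 1` if `d ≥ 1` and `Δ ≥ n_d`, and `a(d,Δ) = 0` otherwise. -/
noncomputable def Kpol (N : ℕ) (p ps : ℝ) (n : ℕ → ℕ) (x y : ℕ × ℕ) : ℝ :=
  if 1 ≤ x.1 ∧ n x.1 ≤ x.2 then K1 N p ps x y else K0 N p x y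

/-- `IsStationaryPol N p ps n π`: `π` is a stationary distribution of the chain induced
by the threshold policy `n`: `π` takes values in `[0,1]`, is supported on states with
`d ≤ N-1`, sums to `1`, and satisfies `π(x) = Σ_{x'} K(x',x)·π(x')` for every `x`. -/
def IsStationaryPol (N : ℕ) (p ps : ℝ) (n : ℕ → ℕ) (π : ℕ × ℕ → ℝ) : Prop :=
  (∀ x, 0 ≤ π x ∧ π x ≤ 1) ∧
  (∀ x : ℕ × ℕ, N ≤ x.1 → π x = 0) ∧
  HasSum π 1 ∧
  (∀ x : ℕ × ℕ, HasSum (fun x' => Kpol N p ps n x' x * π x') (π x))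

/-- Real-valued action indicator of the threshold policy `n`:
`a(d,Δ) = 1` if `d ≥ 1` and `Δ ≥ n_d`, else `0`. -/
noncomputable def Aact (n : ℕ → ℕ) (d Δ : ℕ) : ℝ :=
  if 1 ≤ d ∧ n d ≤ Δ then 1 else 0

/-- `ω_d(Δ) = Δ·π_d(Δ)`. -/
noncomputable def omg (π : ℕ × ℕ → ℝ) (d Δ : ℕ) : ℝ := (Δ : ℝ) * π (d, Δ)

/-- Tail mass `Π_d = Σ_{Δ ≥ τ} π_d(Δ)`. -/
noncomputable def Pid (π : ℕ × ℕ → ℝ) (τ d : ℕ) : ℝ := ∑' Δ : ℕ, π (d, Δ + τ)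

/-- Tail mean `Ω_d = Σ_{Δ ≥ τ} ω_d(Δ)`. -/
noncomputable def Omg (π : ℕ × ℕ → ℝ) (τ d : ℕ) : ℝ := ∑' Δ : ℕ, omg π d (Δ + τ)

/-- The age lower bound `l_d = d(d+1)/2`. -/
def lB (d : ℕ) : ℕ := d * (d + 1) / 2

-- auxiliary lemmas
lemma lB_eq (d : ℕ) : lB d = ∑ i ∈ Finset.range (d+1), i := by
  have h := Finset.sum_range_id_mul_two (d+1)
  simp only [Nat.add_sub_cancel] at h
  unfold lB
  rw [Nat.mul_comm d (d+1), ← h, Nat.mul_div_cancel _ (by norm_num)]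

lemma lB_succ (d : ℕ) : lB (d+1) = lB d + (d+1) := by
  simp [lB_eq, Finset.sum_range_succ]

lemma lB_mono : Monotone lB :=
  monotone_nat_of_le_succ fun d => by rw [lB_succ]; omega

lemma lB_ge (d : ℕ) : d ≤ lB d := by
  cases d with
  | zero => simp [lB]
  | succ k => rw [lB_succ]; omega

lemma lB_pred {d : ℕ} (hd : 1 ≤ d) : lB d - d = lB (d-1) := by
  cases d with
  | zero => omega
  | succ k => rw [lB_succ]; simp

lemma Pw_nonneg {p : ℝ} (hp0 : 0 ≤ p) (hp1 : p ≤ 1/3) (N a b : ℕ) : 0 ≤ Pw N p a b := by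
  unfold Pw; split_ifs <;> linarith

lemma Pw_le_one {p : ℝ} (hp0 : 0 ≤ p) (hp1 : p ≤ 1/3) (N a b : ℕ) : Pw N p a b ≤ 1 := by
  unfold Pw; split_ifs <;> linarith

lemma Pw_ne_zero {N : ℕ} {p : ℝ} (hN : 3 ≤ N) {a b : ℕ} (h : Pw N p a b ≠ 0) :
    a = b ∨ a + 1 = b ∨ a = b + 1 := by
  unfold Pw at h
  split_ifs at h with h1 h2 h3 h4
  · omega
  · omega
  · omega
  · omega
  · exact absurd rfl h

lemma Pw_zero_left {N : ℕ} {p : ℝ} (hN : 3 ≤ N) {b : ℕ} (hb : 2 ≤ b) : Pw N p 0 b = 0 := by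
  unfold Pw
  split_ifs with h1 h2 h3 h4
  · exfalso; omega
  · exfalso; omega
  · exfalso; omega
  · exfalso; omega
  · rfl

lemma kpol_eq_zero {N : ℕ} {p ps : ℝ} {n : ℕ → ℕ} {x y : ℕ × ℕ}
    (h00 : y ≠ (0,0)) (h11 : y ≠ (1,1))
    (hc : y.2 ≠ (if y.1 = 0 then 0 else x.2 + y.1)) : Kpol N p ps n x y = 0 := by
  have hK0 : K0 N p x y = 0 := by unfold K0; rw [if_neg hc]
  unfold Kpol
  split_ifs
  · unfold K1; rw [hK0, if_neg h00, if_neg h11]; ring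
  · exact hK0

lemma kpol_eval {N : ℕ} {p ps : ℝ} {n : ℕ → ℕ} {d Δ d' m : ℕ}
    (hd : 1 ≤ d) (hΔ : 2 ≤ Δ) (hm : Δ = m + d) :
    Kpol N p ps n (d', m) (d, Δ) = (1 - ps * Aact n d' m) * Pw N p d' d := by
  have hd0 : ¬ (d = 0) := by omega
  have hK0 : K0 N p (d', m) (d, Δ) = Pw N p d' d := by
    unfold K0; simp only [hd0, if_false, hm, if_true]
  have h00 : (d, Δ) ≠ ((0:ℕ), (0:ℕ)) := by simp; omega
  have h11 : (d, Δ) ≠ ((1:ℕ), (1:ℕ)) := by simp; omega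
  unfold Kpol Aact
  by_cases hA : 1 ≤ d' ∧ n d' ≤ m
  · rw [if_pos hA, if_pos hA]; unfold K1; rw [hK0, if_neg h00, if_neg h11]; ring
  · rw [if_neg hA, if_neg hA, hK0]; ring

lemma shift_summable {f : ℕ → ℝ} (hf : Summable f) (a b : ℕ) :
    Summable (fun m => f (m + a - b)) := by
  rcases le_or_gt b a with h | h
  · have he : (fun m => f (m + a - b)) = fun m => f (m + (a - b)) :=
      funext fun m => by congr 1; omega
    rw [he]; exact (summable_nat_add_iff _).mpr hf
  · apply (summable_nat_add_iff (b - a)).mp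
    have he : ∀ m : ℕ, m + (b - a) + a - b = m := fun m => by omega
    simp only [he]
    exact hf

lemma shiftlin_summable {w : ℕ → ℝ} (h1 : Summable (fun k : ℕ => (k:ℝ) * w k)) (h2 : Summable w)
    (τ d : ℕ) : Summable (fun m : ℕ => ((m:ℝ) + τ) * w (m + τ - d)) := by
  have hq : ∀ C : ℕ, Summable (fun k : ℕ => ((k:ℝ) + C) * w k) := by
    intro C
    exact (h1.add (h2.mul_left (C:ℝ))).congr fun k => by ring
  rcases le_or_gt d τ with h | h
  · apply ((summable_nat_add_iff (τ - d)).mpr (hq d)).congr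
    intro m
    have e1 : m + (τ - d) = m + τ - d := by omega
    have e2 : ((m + (τ - d) : ℕ) : ℝ) + (d : ℕ) = (m:ℝ) + τ := by
      push_cast [Nat.cast_sub h]; ring
    simp only [e1] at e2 ⊢
    rw [e2]
  · apply (summable_nat_add_iff (d - τ)).mp
    apply (hq d).congr
    intro m
    have e1 : m + (d - τ) + τ - d = m := by omega
    have e2 : ((m + (d - τ) : ℕ) : ℝ) + (τ:ℕ) = (m:ℝ) + d := by
      push_cast [Nat.cast_sub h.le]; ring
    simp only [e1]
    rw [e2]

lemma tail_shift_tsum {f : ℕ → ℝ} (hf : Summable f) (h0 : f 0 = 0) (τ d : ℕ) :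
    ∑' m : ℕ, f (m + τ - d) = (∑ k ∈ Finset.Ico (τ - d) τ, f k) + ∑' m : ℕ, f (m + τ) := by
  rcases le_or_gt d τ with h | h
  · have hsum : Summable (fun m => f (m + (τ - d))) := (summable_nat_add_iff _).mpr hf
    have h1 := Summable.sum_add_tsum_nat_add (f := fun m => f (m + (τ - d))) (τ - (τ - d)) hsum
    have e1 : ∀ m : ℕ, m + (τ - (τ - d)) + (τ - d) = m + τ := fun m => by omega
    simp only [e1] at h1
    have e2 : ∀ m : ℕ, m + τ - d = m + (τ - d) := fun m => by omega
    simp only [e2]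
    rw [← h1]
    congr 1
    rw [Finset.sum_Ico_eq_sum_range]
    exact Finset.sum_congr rfl fun i _ => by rw [Nat.add_comm]
  · have hsumF : Summable (fun m => f (m + τ - d)) := shift_summable hf τ d
    have h1 := Summable.sum_add_tsum_nat_add (f := fun m => f (m + τ - d)) (d - τ) hsumF
    have e1 : ∀ m : ℕ, m + (d - τ) + τ - d = m := fun m => by omega
    simp only [e1] at h1
    have e3 : ∀ i ∈ Finset.range (d - τ), f (i + τ - d) = 0 := by
      intro i hi
      rw [Finset.mem_range] at hi
      have : i + τ - d = 0 := by omega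
      rw [this, h0]
    rw [Finset.sum_eq_zero e3, zero_add] at h1
    have e4 : τ - d = 0 := by omega
    rw [← h1, ← Summable.sum_add_tsum_nat_add τ hf, e4]
    congr 1
    rw [Finset.range_eq_Ico]

section Stationary

variable {N : ℕ} {p ps : ℝ} {n : ℕ → ℕ} {π : ℕ × ℕ → ℝ}

lemma pi_eq_zero_aux (hπ : IsStationaryPol N p ps n π) {y : ℕ × ℕ}
    (h00 : y ≠ (0,0)) (h11 : y ≠ (1,1))
    (hc : ∀ x' : ℕ × ℕ, y.2 ≠ (if y.1 = 0 then 0 else x'.2 + y.1)) : π y = 0 := by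
  have h := hπ.2.2.2 y
  have he : (fun x' => Kpol N p ps n x' y * π x') = fun _ => (0:ℝ) :=
    funext fun x' => by rw [kpol_eq_zero h00 h11 (hc x'), zero_mul]
  rw [he] at h
  exact h.unique hasSum_zero

lemma pi0 (hπ : IsStationaryPol N p ps n π) {Δ : ℕ} (hΔ : 1 ≤ Δ) : π (0, Δ) = 0 := by
  apply pi_eq_zero_aux hπ
  · simp; omega
  · simp
  · intro x'; simp; omega

lemma pi_d_small (hπ : IsStationaryPol N p ps n π) {d Δ : ℕ} (hd : 1 ≤ d) (hΔd : Δ < d) :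
    π (d, Δ) = 0 := by
  apply pi_eq_zero_aux hπ
  · simp; omega
  · simp; omega
  · intro x'; simp only
    have : ¬ (d = 0) := by omega
    rw [if_neg this]
    omega

lemma star (hπ : IsStationaryPol N p ps n π) {d Δ : ℕ} (hd : 1 ≤ d) (hΔ : 2 ≤ Δ) (hdΔ : d ≤ Δ) :
    π (d, Δ) = ∑ d' ∈ Finset.range N,
      (1 - ps * Aact n d' (Δ - d)) * Pw N p d' d * π (d', Δ - d) := by
  have h := hπ.2.2.2 (d, Δ)
  set S : Finset (ℕ × ℕ) := Finset.range N ×ˢ {Δ - d} with hS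
  have hvan : ∀ x' ∉ S, Kpol N p ps n x' (d, Δ) * π x' = 0 := by
    intro x' hx'
    rw [hS, Finset.mem_product, Finset.mem_range, Finset.mem_singleton] at hx'
    push_neg at hx'
    by_cases h1 : x'.1 < N
    · have h2 := hx' h1
      rw [kpol_eq_zero (by simp; omega) (by simp; omega) ?_, zero_mul]
      simp only
      have : ¬ (d = 0) := by omega
      rw [if_neg this]
      omega
    · rw [hπ.2.1 x' (by omega), mul_zero]
  have h2 := hasSum_sum_of_ne_finset_zero (f := fun x' => Kpol N p ps n x' (d, Δ) * π x') (L := SummationFilter.unconditional (ℕ × ℕ)) hvan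
  rw [h.unique h2, hS, Finset.sum_product]
  apply Finset.sum_congr rfl
  intro d' _
  rw [Finset.sum_singleton, kpol_eval hd hΔ (by omega)]

lemma star' (hπ : IsStationaryPol N p ps n π) (hN : 3 ≤ N) {d Δ : ℕ} (hd : 1 ≤ d) (hΔ : 2 ≤ Δ) :
    π (d, Δ) = ∑ d' ∈ Finset.range N,
      (1 - ps * Aact n d' (Δ - d)) * Pw N p d' d * π (d', Δ - d) := by
  rcases le_or_gt d Δ with h | h
  · exact star hπ hd hΔ h
  · rw [pi_d_small hπ hd h]
    symm
    apply Finset.sum_eq_zero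
    intro d' _
    rcases Nat.eq_zero_or_pos d' with h0 | h0
    · rw [h0, Pw_zero_left hN (by omega)]; ring
    · rw [pi_d_small hπ h0 (by omega)]; ring

lemma supp (hπ : IsStationaryPol N p ps n π) (hN : 3 ≤ N) :
    ∀ Δ d : ℕ, 1 ≤ d → Δ < lB d → π (d, Δ) = 0 := by
  intro Δ
  induction Δ using Nat.strong_induction_on with
  | _ Δ ih =>
    intro d hd hΔ
    rcases lt_or_ge Δ d with h | h
    · exact pi_d_small hπ hd h
    · have hd2 : 2 ≤ d := by
        by_contra h2
        have hd1 : d = 1 := by omega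
        rw [hd1] at hΔ
        have hlb1 : lB 1 = 1 := by simp [lB]
        omega
      have hΔ2 : 2 ≤ Δ := by omega
      rw [star hπ hd hΔ2 h]
      apply Finset.sum_eq_zero
      intro d' _
      by_cases hPw : Pw N p d' d = 0
      · rw [hPw]; ring
      · have hcases := Pw_ne_zero hN hPw
        have hd'1 : 1 ≤ d' := by omega
        have hlb : Δ - d < lB d' := by
          have h1 : Δ - d < lB d - d := by
            have := lB_ge d; omega
          rw [lB_pred (by omega)] at h1
          have h2 : lB (d - 1) ≤ lB d' := lB_mono (by omega)
          omega
        rw [ih (Δ - d) (by omega) d' hd'1 hlb]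
        ring

end Stationary

/-- expected AoII: the finite system: for a threshold policy `n` with
`τ = max_d n_d ≥ 2` and a stationary distribution `π` with finite mean age, the
expected AoII `Δ̄ = Σ_{d=0}^{N-1} Σ_Δ Δ·π_d(Δ)` equals
`Σ_{d=1}^{N-1} (Σ_{Δ=l_d}^{τ-1} ω_d(Δ) + Ω_d)`, and the `Ω_d` satisfy the stated
finite balance system. -/
theorem expected_AoII_finite_system
    (N : ℕ) (p ps : ℝ)
    (hN : 3 ≤ N) (hp0 : 0 ≤ p) (hp1 : p ≤ 1 / 3)
    (hps0 : 0 < ps) (hps1 : ps ≤ 1)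
    (n : ℕ → ℕ) (hn : ∀ d, 1 ≤ d → d ≤ N - 1 → 1 ≤ n d)
    (τ : ℕ) (hτub : ∀ d ∈ Finset.Icc 1 (N - 1), n d ≤ τ)
    (hτmem : ∃ d ∈ Finset.Icc 1 (N - 1), n d = τ) (hτ2 : 2 ≤ τ)
    (π : ℕ × ℕ → ℝ) (hπ : IsStationaryPol N p ps n π)
    (hmean : ∀ d : ℕ, Summable (fun Δ : ℕ => (Δ : ℝ) * π (d, Δ))) :
    (∑ d ∈ Finset.range N, ∑' Δ : ℕ, (Δ : ℝ) * π (d, Δ))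
      = ∑ d ∈ Finset.Icc 1 (N - 1),
          ((∑ Δ ∈ Finset.Ico (lB d) τ, omg π d Δ) + Omg π τ d) ∧
    (∀ d ∈ Finset.Icc 1 (N - 1),
      Omg π τ d = (∑ d' ∈ Finset.Icc 1 (N - 1),
        Pw N p d' d *
          ((∑ Δ ∈ Finset.Ico (τ - d) τ, (1 - ps * Aact n d' Δ) * omg π d' Δ)
            + (1 - ps) * Omg π τ d')) + (d : ℝ) * Pid π τ d) := by
  have hπ0 : ∀ x, 0 ≤ π x := fun x => (hπ.1 x).1
  have sSlice : ∀ d : ℕ, Summable (fun Δ : ℕ => π (d, Δ)) := fun d =>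
    hπ.2.2.1.summable.comp_injective (fun a b hab => by simpa using hab)
  have hsupp := supp hπ hN
  have hsub' : Finset.Icc 1 (N - 1) ⊆ Finset.range N := by
    intro x hx
    rw [Finset.mem_Icc] at hx
    rw [Finset.mem_range]
    omega
  have hc0 : ∀ d' m : ℕ, 0 ≤ 1 - ps * Aact n d' m := by
    intro d' m; unfold Aact; split_ifs <;> linarith
  have hc1 : ∀ d' m : ℕ, 1 - ps * Aact n d' m ≤ 1 := by
    intro d' m; unfold Aact; split_ifs <;> linarith
  constructor
  · -- Part 1
    have hz : ∀ x ∈ Finset.range N, x ∉ Finset.Icc 1 (N - 1) →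
        (∑' Δ : ℕ, (Δ : ℝ) * π (x, Δ)) = 0 := by
      intro x hx hnx
      rw [Finset.mem_range] at hx
      have hx0 : x = 0 := by
        simp only [Finset.mem_Icc, not_and, not_le] at hnx
        omega
      subst hx0
      have he : (fun Δ : ℕ => (Δ : ℝ) * π (0, Δ)) = fun _ => (0 : ℝ) := by
        funext Δ
        cases Δ with
        | zero => simp
        | succ k => rw [pi0 hπ (by omega), mul_zero]
      rw [he, tsum_zero]
    rw [← Finset.sum_subset hsub' hz]
    apply Finset.sum_congr rfl
    intro d hd
    rw [Finset.mem_Icc] at hd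
    rw [← Summable.sum_add_tsum_nat_add τ (hmean d)]
    congr 1
    · have hsub2 : Finset.Ico (lB d) τ ⊆ Finset.range τ := by
        intro x hx
        rw [Finset.mem_Ico] at hx
        rw [Finset.mem_range]
        omega
      have hz2 : ∀ x ∈ Finset.range τ, x ∉ Finset.Ico (lB d) τ → omg π d x = 0 := by
        intro x hx hnx
        rw [Finset.mem_range] at hx
        have hlt : x < lB d := by
          simp only [Finset.mem_Ico, not_and, not_lt] at hnx
          omega
        rw [omg, hsupp x d hd.1 hlt, mul_zero]
      exact (Finset.sum_subset hsub2 hz2).symm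
  · -- Part 2
    intro d hdmem
    have hd1 : 1 ≤ d := (Finset.mem_Icc.mp hdmem).1
    have hstar' : ∀ Δ : ℕ, 2 ≤ Δ → π (d, Δ) = ∑ d' ∈ Finset.range N,
        (1 - ps * Aact n d' (Δ - d)) * Pw N p d' d * π (d', Δ - d) :=
      fun Δ hΔ => star' hπ hN hd1 hΔ
    have sBigPw : ∀ d' : ℕ, Summable (fun m : ℕ =>
        ((m : ℝ) + τ) * ((1 - ps * Aact n d' (m + τ - d)) * Pw N p d' d * π (d', m + τ - d))) := by
      intro d'
      apply Summable.of_nonneg_of_le ?_ ?_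
        ((shiftlin_summable (hmean d') (sSlice d') τ d).mul_left (Pw N p d' d))
      · intro m
        have hM : (0:ℝ) ≤ (m : ℝ) + τ := by positivity
        exact mul_nonneg hM (mul_nonneg (mul_nonneg (hc0 _ _) (Pw_nonneg hp0 hp1 N d' d)) (hπ0 _))
      · intro m
        have hM : (0:ℝ) ≤ (m : ℝ) + τ := by positivity
        have hπx := hπ0 (d', m + τ - d)
        have hPw := Pw_nonneg hp0 hp1 N d' d
        calc ((m : ℝ) + τ) * ((1 - ps * Aact n d' (m + τ - d)) * Pw N p d' d * π (d', m + τ - d))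
            ≤ ((m : ℝ) + τ) * (1 * Pw N p d' d * π (d', m + τ - d)) := by
              apply mul_le_mul_of_nonneg_left
                (mul_le_mul_of_nonneg_right (mul_le_mul_of_nonneg_right (hc1 _ _) hPw) hπx) hM
          _ = Pw N p d' d * (((m : ℝ) + τ) * π (d', m + τ - d)) := by ring
    have sPiPw : ∀ d' : ℕ, Summable (fun m : ℕ =>
        (1 - ps * Aact n d' (m + τ - d)) * Pw N p d' d * π (d', m + τ - d)) := by
      intro d'
      apply Summable.of_nonneg_of_le ?_ ?_
        ((shift_summable (sSlice d') τ d).mul_left (Pw N p d' d))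
      · intro m
        exact mul_nonneg (mul_nonneg (hc0 _ _) (Pw_nonneg hp0 hp1 N d' d)) (hπ0 _)
      · intro m
        have hπx := hπ0 (d', m + τ - d)
        have hPw := Pw_nonneg hp0 hp1 N d' d
        calc (1 - ps * Aact n d' (m + τ - d)) * Pw N p d' d * π (d', m + τ - d)
            ≤ 1 * Pw N p d' d * π (d', m + τ - d) :=
              mul_le_mul_of_nonneg_right (mul_le_mul_of_nonneg_right (hc1 _ _) hPw) hπx
          _ = Pw N p d' d * π (d', m + τ - d) := by ring
    have hOmg : Omg π τ d = ∑ d' ∈ Finset.range N, Pw N p d' d *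
        ∑' m : ℕ, ((m : ℝ) + τ) * ((1 - ps * Aact n d' (m + τ - d)) * π (d', m + τ - d)) := by
      have e1 : Omg π τ d = ∑' m : ℕ, ∑ d' ∈ Finset.range N,
          ((m : ℝ) + τ) * ((1 - ps * Aact n d' (m + τ - d)) * Pw N p d' d * π (d', m + τ - d)) := by
        simp only [Omg, omg]
        apply tsum_congr
        intro m
        rw [hstar' (m + τ) (by omega), Finset.mul_sum]
        apply Finset.sum_congr rfl
        intro d' _
        push_cast
        ring
      rw [e1, Summable.tsum_finsetSum (fun d' _ => sBigPw d')]
      apply Finset.sum_congr rfl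
      intro d' _
      rw [← tsum_mul_left]
      exact tsum_congr fun m => by ring
    have hPid : Pid π τ d = ∑ d' ∈ Finset.range N, Pw N p d' d *
        ∑' m : ℕ, (1 - ps * Aact n d' (m + τ - d)) * π (d', m + τ - d) := by
      have e1 : Pid π τ d = ∑' m : ℕ, ∑ d' ∈ Finset.range N,
          (1 - ps * Aact n d' (m + τ - d)) * Pw N p d' d * π (d', m + τ - d) := by
        simp only [Pid]
        exact tsum_congr fun m => hstar' (m + τ) (by omega)
      rw [e1, Summable.tsum_finsetSum (fun d' _ => sPiPw d')]
      apply Finset.sum_congr rfl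
      intro d' _
      rw [← tsum_mul_left]
      exact tsum_congr fun m => by ring
    have hA0 : Pw N p 0 d *
        (∑' m : ℕ, ((m : ℝ) + τ) * ((1 - ps * Aact n 0 (m + τ - d)) * π (0, m + τ - d))) = 0 := by
      rcases Nat.lt_or_ge d 2 with h2 | h2
      · have hd1' : d = 1 := by omega
        have he : (fun m : ℕ => ((m : ℝ) + τ) *
            ((1 - ps * Aact n 0 (m + τ - d)) * π (0, m + τ - d))) = fun _ => (0 : ℝ) := by
          funext m
          rw [pi0 hπ (by omega)]
          ring
        rw [he, tsum_zero, mul_zero]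
      · rw [Pw_zero_left hN h2, zero_mul]
    have hB0 : Pw N p 0 d *
        (∑' m : ℕ, (1 - ps * Aact n 0 (m + τ - d)) * π (0, m + τ - d)) = 0 := by
      rcases Nat.lt_or_ge d 2 with h2 | h2
      · have hd1' : d = 1 := by omega
        have he : (fun m : ℕ => (1 - ps * Aact n 0 (m + τ - d)) * π (0, m + τ - d))
            = fun _ => (0 : ℝ) := by
          funext m
          rw [pi0 hπ (by omega)]
          ring
        rw [he, tsum_zero, mul_zero]
      · rw [Pw_zero_left hN h2, zero_mul]
    have hOmg2 : Omg π τ d = ∑ d' ∈ Finset.Icc 1 (N - 1), Pw N p d' d *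
        ∑' m : ℕ, ((m : ℝ) + τ) * ((1 - ps * Aact n d' (m + τ - d)) * π (d', m + τ - d)) := by
      rw [hOmg]
      apply (Finset.sum_subset hsub' ?_).symm
      intro x hx hnx
      have hx0 : x = 0 := by
        rw [Finset.mem_range] at hx
        simp only [Finset.mem_Icc, not_and, not_le] at hnx
        omega
      subst hx0
      exact hA0
    have hPid2 : Pid π τ d = ∑ d' ∈ Finset.Icc 1 (N - 1), Pw N p d' d *
        ∑' m : ℕ, (1 - ps * Aact n d' (m + τ - d)) * π (d', m + τ - d) := by
      rw [hPid]
      apply (Finset.sum_subset hsub' ?_).symm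
      intro x hx hnx
      have hx0 : x = 0 := by
        rw [Finset.mem_range] at hx
        simp only [Finset.mem_Icc, not_and, not_le] at hnx
        omega
      subst hx0
      exact hB0
    have hKeyA : ∀ d', 1 ≤ d' → d' ≤ N - 1 →
        (∑' m : ℕ, ((m : ℝ) + τ) * ((1 - ps * Aact n d' (m + τ - d)) * π (d', m + τ - d)))
        = ((∑ Δ ∈ Finset.Ico (τ - d) τ, (1 - ps * Aact n d' Δ) * omg π d' Δ)
            + (1 - ps) * Omg π τ d')
          + (d : ℝ) * ∑' m : ℕ, (1 - ps * Aact n d' (m + τ - d)) * π (d', m + τ - d) := by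
      intro d' hd'1 hd'N
      set g : ℕ → ℝ := fun k => (1 - ps * Aact n d' k) * omg π d' k with hg
      have hg0 : g 0 = 0 := by simp [hg, omg]
      have sg : Summable g := by
        apply Summable.of_nonneg_of_le ?_ ?_ (hmean d')
        · intro k
          exact mul_nonneg (hc0 d' k) (mul_nonneg (by positivity) (hπ0 _))
        · intro k
          have h1 : g k ≤ 1 * omg π d' k :=
            mul_le_mul_of_nonneg_right (hc1 d' k) (mul_nonneg (by positivity) (hπ0 _))
          simpa [omg] using h1
      have spt : Summable (fun m : ℕ => g (m + τ - d)) := shift_summable sg τ d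
      have scπ : Summable (fun m : ℕ =>
          (1 - ps * Aact n d' (m + τ - d)) * π (d', m + τ - d)) := by
        apply Summable.of_nonneg_of_le ?_ ?_ (shift_summable (sSlice d') τ d)
        · intro m
          exact mul_nonneg (hc0 _ _) (hπ0 _)
        · intro m
          calc (1 - ps * Aact n d' (m + τ - d)) * π (d', m + τ - d)
              ≤ 1 * π (d', m + τ - d) := mul_le_mul_of_nonneg_right (hc1 _ _) (hπ0 _)
            _ = π (d', m + τ - d) := one_mul _
      have hpt : ∀ m : ℕ, ((m : ℝ) + τ) * ((1 - ps * Aact n d' (m + τ - d)) * π (d', m + τ - d))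
          = g (m + τ - d) + (d : ℝ) * ((1 - ps * Aact n d' (m + τ - d)) * π (d', m + τ - d)) := by
        intro m
        rcases le_or_gt d (m + τ) with h | h
        · have hcast : ((m + τ - d : ℕ) : ℝ) = (m : ℝ) + τ - d := by
            rw [Nat.cast_sub h]
            push_cast
            ring
          simp only [hg, omg]
          rw [hcast]
          ring
        · have h0' : m + τ - d = 0 := by omega
          have hπz : π (d', 0) = 0 := pi_d_small hπ hd'1 hd'1
          rw [h0', hg0, hπz]
          ring
      have htail : ∑' m : ℕ, g (m + τ) = (1 - ps) * Omg π τ d' := by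
        have he : ∀ m : ℕ, g (m + τ) = (1 - ps) * omg π d' (m + τ) := by
          intro m
          have ha : Aact n d' (m + τ) = 1 := by
            unfold Aact
            rw [if_pos ⟨hd'1, le_trans (hτub d' (Finset.mem_Icc.mpr ⟨hd'1, hd'N⟩)) (by omega)⟩]
          simp only [hg, ha]
          ring
        rw [tsum_congr he, tsum_mul_left]
        rfl
      rw [tsum_congr hpt, Summable.tsum_add spt (scπ.mul_left (d : ℝ)), tsum_mul_left,
        tail_shift_tsum sg hg0 τ d, htail]
    rw [hOmg2, hPid2, Finset.mul_sum, ← Finset.sum_add_distrib]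
    apply Finset.sum_congr rfl
    intro d' hd'
    rw [Finset.mem_Icc] at hd'
    rw [hKeyA d' hd'.1 hd'.2]
    ring
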